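/- arXiv:1207.4980 — 6 statements merged into one kernel-verified Lean document; each statement's English description precedes it below -/
import Mathlib

section
/- Let α ≥ α' > 0 and β' ∈ ℝ, and let v = (r, c₁, c₂) and v' = (r', c₁', c₂') in ℝ³ satisfy: c₂ − β'·c₁ + ((β'² − α'²)/2)·r = 0 and c₂' − β'·c₁' + ((β'² − α'²)/2)·r' = 0 (both ν_{α',β'}-slopes vanish), and 0 < c₁' − β'·r' < c₁ − β'·r. Then Δ̄(v') + (α'·r')² < Δ̄(v) + (α·r)², where Δ̄(w) = c₁(w)² − 2·r(w)·c₂(w). -/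
/-- Monotonicity of `Δ̄ + (α r)²` along the reduction argument: if both
`ν_{α',β'}`-slopes of `v = (r, c₁, c₂)` and `v' = (r', c₁', c₂')` vanish,
`α ≥ α' > 0`, and `0 < c₁'^{β'} < c₁^{β'}`, then
`Δ̄(v') + (α' r')² < Δ̄(v) + (α r)²`. -/
theorem disc_plus_alpha_rank_sq_decreases
    (α α' β' r c₁ c₂ r' c₁' c₂' : ℝ)
    (hαα' : α' ≤ α) (hα' : 0 < α')
    (hv : c₂ - β' * c₁ + ((β' ^ 2 - α' ^ 2) / 2) * r = 0)
    (hv' : c₂' - β' * c₁' + ((β' ^ 2 - α' ^ 2) / 2) * r' = 0)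
    (hpos : 0 < c₁' - β' * r') (hlt : c₁' - β' * r' < c₁ - β' * r) :
    (c₁' ^ 2 - 2 * r' * c₂') + (α' * r') ^ 2
      < (c₁ ^ 2 - 2 * r * c₂) + (α * r) ^ 2 := by
  have hc : c₂ = β' * c₁ - ((β' ^ 2 - α' ^ 2) / 2) * r := by linarith
  have hc' : c₂' = β' * c₁' - ((β' ^ 2 - α' ^ 2) / 2) * r' := by linarith
  subst hc hc'
  have h1 : ∀ a b : ℝ, a ^ 2 - 2 * b * (β' * a - ((β' ^ 2 - α' ^ 2) / 2) * b) + (α' * b) ^ 2 = (a - β' * b) ^ 2 := by intro a b; ring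
  rw [h1]
  have h3 : c₁ ^ 2 - 2 * r * (β' * c₁ - ((β' ^ 2 - α' ^ 2) / 2) * r) + (α * r) ^ 2
      = (c₁ - β' * r) ^ 2 + ((α * r) ^ 2 - (α' * r) ^ 2) := by ring
  rw [h3]
  have key : (c₁' - β' * r') ^ 2 < (c₁ - β' * r) ^ 2 := by
    nlinarith [mul_pos (sub_pos.mpr hlt) (by linarith : (0:ℝ) < (c₁ - β' * r) + (c₁' - β' * r'))]
  have h2 : (α' * r) ^ 2 ≤ (α * r) ^ 2 := by
    nlinarith [mul_nonneg (mul_nonneg (by linarith : (0:ℝ) ≤ α + α') (by linarith : (0:ℝ) ≤ α - α')) (sq_nonneg r)]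
  linarith
end

section
/- Let Γ₀, Γ₁, α₀, b be nonnegative real numbers and let v = (r, c₁, c₂) ∈ ℝ³ with |r| ≥ 1. Suppose 0 ≤ Δ̄(v) ≤ Γ₀ and r² ≤ Γ₁, and suppose there exist α, β with 0 < α ≤ α₀ and |β| ≤ b such that c₂ − β·c₁ + ((β² − α²)/2)·r = 0 (i.e., ν_{α,β}(v) = 0). Then |c₁| ≤ √Γ₁ · ( b + √(α₀² + Γ₀) ). -/
/-- Bound for `c₁`: if `|r| ≥ 1`, `0 ≤ Δ̄(v) ≤ Γ₀`, `r² ≤ Γ₁`, and there exist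
`α, β` with `0 < α ≤ α₀`, `|β| ≤ b`, and `ν_{α,β}(v) = 0`
(i.e. `c₂ − β c₁ + ((β² − α²)/2) r = 0`), then
`|c₁| ≤ √Γ₁ (b + √(α₀² + Γ₀))`. -/
theorem c1_bound (Γ₀ Γ₁ α₀ b r c₁ c₂ : ℝ)
    (hΓ₀ : 0 ≤ Γ₀) (hΓ₁ : 0 ≤ Γ₁) (hα₀ : 0 ≤ α₀) (hb : 0 ≤ b)
    (hr : 1 ≤ |r|)
    (hd0 : 0 ≤ c₁ ^ 2 - 2 * r * c₂) (hd1 : c₁ ^ 2 - 2 * r * c₂ ≤ Γ₀)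
    (hr2 : r ^ 2 ≤ Γ₁)
    (hex : ∃ α β : ℝ, 0 < α ∧ α ≤ α₀ ∧ |β| ≤ b ∧
      c₂ - β * c₁ + ((β ^ 2 - α ^ 2) / 2) * r = 0) :
    |c₁| ≤ Real.sqrt Γ₁ * (b + Real.sqrt (α₀ ^ 2 + Γ₀)) := by
  obtain ⟨α, β, hα, hαα, hβ, heq⟩ := hex
  have hr1 : 1 ≤ r ^ 2 := by nlinarith [sq_abs r]
  have key : (c₁ - β * r) ^ 2 = (c₁ ^ 2 - 2 * r * c₂) + α ^ 2 * r ^ 2 := by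
    linear_combination 2*r*heq
  have hkey2 : (c₁ - β * r) ^ 2 ≤ Γ₁ * (α₀ ^ 2 + Γ₀) := by
    have hα2 : α ^ 2 ≤ α₀ ^ 2 := by nlinarith
    nlinarith [mul_le_mul hα2 hr2 (sq_nonneg r) (sq_nonneg α₀),
      mul_nonneg hΓ₀ (sub_nonneg.2 hr1)]
  have h1 : |c₁ - β * r| ≤ Real.sqrt (Γ₁ * (α₀ ^ 2 + Γ₀)) := by
    rw [← Real.sqrt_sq_eq_abs]
    exact Real.sqrt_le_sqrt hkey2
  have hrΓ : |r| ≤ Real.sqrt Γ₁ := by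
    rw [← Real.sqrt_sq_eq_abs]
    exact Real.sqrt_le_sqrt hr2
  have h2 : |β * r| ≤ b * Real.sqrt Γ₁ := by
    rw [abs_mul]
    exact mul_le_mul hβ hrΓ (abs_nonneg r) hb
  calc |c₁| = |(c₁ - β * r) + β * r| := by ring_nf
    _ ≤ |c₁ - β * r| + |β * r| := abs_add_le _ _
    _ ≤ Real.sqrt (Γ₁ * (α₀ ^ 2 + Γ₀)) + b * Real.sqrt Γ₁ := add_le_add h1 h2
    _ = Real.sqrt Γ₁ * (b + Real.sqrt (α₀ ^ 2 + Γ₀)) := by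
        rw [Real.sqrt_mul hΓ₁]; ring
end

section
/- For all real (β, α) with −2/3 < β < −α and 0 < α < 1/3 (the region V₁): λ_{α,β}(3, −2, 0, 2/3) < λ_{α,β}(1, 1, 1/2, 1/6); explicitly, [(2/3 − β² − β³/2) + (α²/6)(3β + 2)] / (2β + (3/2)β² − (3/2)α²) < −β/3 + 1/3, the denominator 2β + (3/2)β² − (3/2)α² being negative (in particular nonzero) on this region. (This is the comparison λ_{α,β}(Q) < λ_{α,β}(O(1)) on V₁.) -/
/-- Second-tilt slope `λ_{α,β}` of a Chern vector `(r, c₁, c₂, c₃)` on `P³`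
(`H³ = 1`). -/
noncomputable def tiltLambda (α β r c₁ c₂ c₃ : ℝ) : ℝ :=
  ((c₃ - β * c₂ + (β ^ 2 / 2) * c₁ - (β ^ 3 / 6) * r)
      - (α ^ 2 / 6) * (c₁ - β * r)) /
    (c₂ - β * c₁ + (β ^ 2 / 2) * r - (α ^ 2 / 2) * r)

/-- On the region `V₁ = {(β, α) : −2/3 < β < −α, 0 < α < 1/3}`:
`λ_{α,β}(Q) < λ_{α,β}(O(1))`, with `ch(Q) = (3, −2, 0, 2/3)` and
`ch(O(1)) = (1, 1, 1/2, 1/6)`; explicitly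
`[(2/3 − β² − β³/2) + (α²/6)(3β + 2)] / (2β + (3/2)β² − (3/2)α²) < −β/3 + 1/3`,
the denominator `2β + (3/2)β² − (3/2)α²` being negative on this region. -/
theorem lambda_Q_lt_lambda_O1_on_V1 (α β : ℝ) (h1 : -2/3 < β) (h2 : β < -α)
    (h3 : 0 < α) (h4 : α < 1/3) :
    (2 * β + (3/2) * β ^ 2 - (3/2) * α ^ 2 < 0) ∧
    tiltLambda α β 3 (-2) 0 (2/3) < tiltLambda α β 1 1 (1/2) (1/6) ∧
    ((2/3 - β ^ 2 - β ^ 3 / 2) + (α ^ 2 / 6) * (3 * β + 2)) /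
        (2 * β + (3/2) * β ^ 2 - (3/2) * α ^ 2)
      < -β / 3 + 1/3 := by
  have hβ0 : β < 0 := lt_trans h2 (by linarith)
  have hD : 2 * β + (3/2) * β ^ 2 - (3/2) * α ^ 2 < 0 := by nlinarith
  -- the explicit inequality
  have hkey : ((2/3 - β ^ 2 - β ^ 3 / 2) + (α ^ 2 / 6) * (3 * β + 2)) /
        (2 * β + (3/2) * β ^ 2 - (3/2) * α ^ 2) < -β / 3 + 1/3 := by
    rw [div_lt_iff_of_neg hD]
    nlinarith [sq_nonneg α, sq_nonneg β]
  refine ⟨hD, ?_, hkey⟩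
  -- λ(Q) equals the explicit expression
  have hQ : tiltLambda α β 3 (-2) 0 (2/3) =
      ((2/3 - β ^ 2 - β ^ 3 / 2) + (α ^ 2 / 6) * (3 * β + 2)) /
        (2 * β + (3/2) * β ^ 2 - (3/2) * α ^ 2) := by
    unfold tiltLambda; ring_nf
  -- λ(O(1)) equals (1-β)/3
  have hne : (1/2 : ℝ) - β * 1 + (β ^ 2 / 2) * 1 - (α ^ 2 / 2) * 1 ≠ 0 := by
    nlinarith [sq_nonneg (1 - β)]
  have hO : tiltLambda α β 1 1 (1/2) (1/6) = -β / 3 + 1/3 := by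
    unfold tiltLambda
    rw [div_eq_iff hne]
    ring
  rw [hQ, hO]
  exact hkey
end

section
/- For all real (β, α) with −α < β ≤ 0 and 0 < α < 1/3 (the region V₂): λ_{α,β}(3, −2, 0, 2/3) < λ_{α,β}(1, 0, 0, 0) = −β/3, both denominators c₂^β − (α²/2)·r being nonzero on this region. (This is the comparison λ_{α,β}(Q) < λ_{α,β}(O) on V₂.) -/
/-- On the region `V₂ = {(β, α) : −α < β ≤ 0, 0 < α < 1/3}`:
`λ_{α,β}(Q) < λ_{α,β}(O) = −β/3`, with `ch(Q) = (3, −2, 0, 2/3)` and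
`ch(O) = (1, 0, 0, 0)`, both denominators `c₂^β − (α²/2) r` being nonzero on
this region. -/
theorem lambda_Q_lt_lambda_O_on_V2 (α β : ℝ) (h1 : -α < β) (h2 : β ≤ 0)
    (h3 : 0 < α) (h4 : α < 1/3) :
    (β ^ 2 / 2 - α ^ 2 / 2 ≠ 0) ∧
    (2 * β + (3/2) * β ^ 2 - (3/2) * α ^ 2 ≠ 0) ∧
    tiltLambda α β 1 0 0 0 = -β / 3 ∧
    tiltLambda α β 3 (-2) 0 (2/3) < tiltLambda α β 1 0 0 0 := by
  have hb2 : β ^ 2 < α ^ 2 := by nlinarith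
  have hD1 : β ^ 2 / 2 - α ^ 2 / 2 < 0 := by nlinarith
  have hD2 : 2 * β + (3/2) * β ^ 2 - (3/2) * α ^ 2 < 0 := by nlinarith
  have hO : tiltLambda α β 1 0 0 0 = -β / 3 := by
    unfold tiltLambda
    rw [div_eq_iff (by nlinarith : (0:ℝ) - β * 0 + β ^ 2 / 2 * 1 - α ^ 2 / 2 * 1 ≠ 0)]
    ring
  refine ⟨ne_of_lt hD1, ne_of_lt hD2, hO, ?_⟩
  rw [hO]
  unfold tiltLambda
  rw [div_lt_iff_of_neg (by nlinarith : (0:ℝ) - β * (-2) + β ^ 2 / 2 * 3 - α ^ 2 / 2 * 3 < 0)]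
  nlinarith [sq_nonneg β, sq_nonneg α]
end

section
/- Let d and h be real numbers with d ≥ 2. (i) The unique pair (β, α) with β < 0 < α satisfying both β² − α² = 2d and α² + (β + (2d+1)/2)² = ((2d−1)/2)² is (β, α) = (−(2d+1)/2, (2d−1)/2). (ii) Setting β₀ := −(2d+1)/2 and α₀ := (2d−1)/2, if the Bogomolov–Gieseker inequality c₃^{β₀} ≤ (α₀²/6)·c₁^{β₀} holds for the vector v = (1, 0, −d, h + 2d) — explicitly, if (h + 2d) + β₀·d − β₀³/6 ≤ (α₀²/6)·(−β₀) — then h ≤ (2d² − 5d)/3. (This is the computation behind inequality (4.1) of the Castelnuovo-type Corollary: for a pure one-dimensional scheme C ⊂ P³ of degree d ≥ 2 with h := ch₃(I_C) − 2d, tilt-stability of I_C at the intersection of the hyperbola ν = 0 with the wall B₁ yields h ≤ (2d² − 5d)/3.) -/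
/-- (i) For `d ≥ 2`, the unique `(β, α)` with `β < 0 < α` on both the
hyperbola `β² − α² = 2d` and the wall `B₁ : α² + (β + (2d+1)/2)² = ((2d−1)/2)²`
is `(−(2d+1)/2, (2d−1)/2)`.
(ii) At that point, the Bogomolov–Gieseker inequality for
`v = (1, 0, −d, h + 2d)`, namely
`(h + 2d) + β₀ d − β₀³/6 ≤ (α₀²/6)(−β₀)`, implies `h ≤ (2d² − 5d)/3`. -/
theorem castelnuovo_wall_B1 (d h : ℝ) (hd : 2 ≤ d) :
    (∀ β α : ℝ,
      (β < 0 ∧ 0 < α ∧ β ^ 2 - α ^ 2 = 2 * d ∧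
        α ^ 2 + (β + (2 * d + 1) / 2) ^ 2 = ((2 * d - 1) / 2) ^ 2) ↔
      (β = -((2 * d + 1) / 2) ∧ α = (2 * d - 1) / 2)) ∧
    ((h + 2 * d) + (-((2 * d + 1) / 2)) * d - (-((2 * d + 1) / 2)) ^ 3 / 6
        ≤ (((2 * d - 1) / 2) ^ 2 / 6) * (-(-((2 * d + 1) / 2))) →
      h ≤ (2 * d ^ 2 - 5 * d) / 3) := by
  constructor
  · intro β α
    constructor
    · rintro ⟨hβ, hα, h1, h2⟩
      have hβeq : β = -((2 * d + 1) / 2) := by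
        have key : β * (2 * β + (2 * d + 1)) = 0 := by nlinarith [h1, h2]
        rcases mul_eq_zero.1 key with h | h
        · linarith
        · linarith
      refine ⟨hβeq, ?_⟩
      have hα2 : α ^ 2 = ((2 * d - 1) / 2) ^ 2 := by
        subst hβeq; nlinarith [h1]
      have key : (α - (2 * d - 1) / 2) * (α + (2 * d - 1) / 2) = 0 := by
        nlinarith [hα2]
      rcases mul_eq_zero.1 key with h | h
      · linarith
      · nlinarith
    · rintro ⟨hβ, hα⟩
      subst hβ; subst hα
      refine ⟨by linarith, by linarith, by ring, by ring⟩
  · intro hBG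
    nlinarith [hBG]
end

section
/- Let d and h be real numbers with d > 2. (i) The unique pair (β, α) with β < 0 < α satisfying both β² − α² = 2d and α² + (β + (d+2)/2)² = ((d−2)/2)² is (β, α) = (−(d+2)/2, (d−2)/2). (ii) Setting β₀ := −(d+2)/2 and α₀ := (d−2)/2, if the Bogomolov–Gieseker inequality c₃^{β₀} ≤ (α₀²/6)·c₁^{β₀} holds for the vector v = (1, 0, −d, h + 2d) — explicitly, if (h + 2d) + β₀·d − β₀³/6 ≤ (α₀²/6)·(−β₀) — then h ≤ (d² − 4d)/3. (This is the computation behind inequality (4.2) of the Castelnuovo-type Corollary: for an integral curve C ⊂ P³ of degree d not contained in a plane, with h := ch₃(I_C) − 2d = g − 1, tilt-stability of I_C at the intersection of the hyperbola ν = 0 with the wall B₂ yields g − 1 ≤ (d² − 4d)/3.) -/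
/-- (i) For `d > 2`, the unique `(β, α)` with `β < 0 < α` on both the
hyperbola `β² − α² = 2d` and the wall `B₂ : α² + (β + (d+2)/2)² = ((d−2)/2)²`
is `(−(d+2)/2, (d−2)/2)`.
(ii) At that point, the Bogomolov–Gieseker inequality for
`v = (1, 0, −d, h + 2d)`, namely
`(h + 2d) + β₀ d − β₀³/6 ≤ (α₀²/6)(−β₀)`, implies `h ≤ (d² − 4d)/3`. -/
theorem castelnuovo_wall_B2 (d h : ℝ) (hd : 2 < d) :
    (∀ β α : ℝ,
      (β < 0 ∧ 0 < α ∧ β ^ 2 - α ^ 2 = 2 * d ∧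
        α ^ 2 + (β + (d + 2) / 2) ^ 2 = ((d - 2) / 2) ^ 2) ↔
      (β = -((d + 2) / 2) ∧ α = (d - 2) / 2)) ∧
    ((h + 2 * d) + (-((d + 2) / 2)) * d - (-((d + 2) / 2)) ^ 3 / 6
        ≤ (((d - 2) / 2) ^ 2 / 6) * (-(-((d + 2) / 2))) →
      h ≤ (d ^ 2 - 4 * d) / 3) := by
  constructor
  · intro β α
    constructor
    · rintro ⟨hβ, hα, hhyp, hcirc⟩
      have hfac : β * (2 * β + (d + 2)) = 0 := by nlinarith [sq_nonneg α]
      have hβne : β ≠ 0 := ne_of_lt hβ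
      have hβval : β = -((d + 2) / 2) := by
        rcases mul_eq_zero.mp hfac with h1 | h2
        · exact absurd h1 hβne
        · linarith
      refine ⟨hβval, ?_⟩
      have hα2 : α ^ 2 = ((d - 2) / 2) ^ 2 := by
        subst hβval; nlinarith
      have : (α - (d - 2) / 2) * (α + (d - 2) / 2) = 0 := by ring_nf; nlinarith
      rcases mul_eq_zero.mp this with h1 | h2
      · linarith
      · nlinarith
    · rintro ⟨hβ, hα⟩
      subst hβ; subst hα
      refine ⟨by linarith, by linarith, by ring, by ring⟩
  · intro hBG
    nlinarith
end
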